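/- Let (X,d) be a separable metric space, μ a finite Borel measure on X, and scl a scaling. Then the μ-essential supremum of the lower local scale of μ is at most the lower quantization scale of μ, and the μ-essential supremum of the upper local scale of μ is at most the upper quantization scale of μ. -/

import Mathlib

open Filter MeasureTheory Metric Set
open scoped ENNReal Topology NNReal

noncomputable section

/-- A *scaling* is a family `(s α)_{α>0}` of positive non-decreasing functions on `(0,1)`
such that for all `α > β > 0` there is `λ₀ > 1` with, for every `λ ∈ (1, λ₀)`,
`s α ε / s β (ε^λ) → 0` and `s α ε / (s β ε)^λ → 0` as `ε → 0⁺`. -/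
def IsScaling (s : ℝ → ℝ → ℝ) : Prop :=
  (∀ α : ℝ, 0 < α → ∀ ε ∈ Set.Ioo (0:ℝ) 1, 0 < s α ε) ∧
  (∀ α : ℝ, 0 < α → MonotoneOn (s α) (Set.Ioo (0:ℝ) 1)) ∧
  (∀ α β : ℝ, 0 < β → β < α → ∃ l₀ > (1:ℝ), ∀ l ∈ Set.Ioo (1:ℝ) l₀,
    Tendsto (fun ε : ℝ => s α ε / s β (ε ^ l)) (𝓝[>] (0:ℝ)) (𝓝 0) ∧
    Tendsto (fun ε : ℝ => s α ε / (s β ε) ^ l) (𝓝[>] (0:ℝ)) (𝓝 0))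

/-- The covering number `N_ε(E)`: minimal cardinality of a finite cover of `E` by balls of
radius `ε` centered in `E` (`+∞` if there is no such finite cover). -/
def coveringNumber {X : Type*} [MetricSpace X] (E : Set X) (ε : ℝ) : ℝ≥0∞ :=
  ⨅ (t : Finset X) (_ : (↑t : Set X) ⊆ E ∧ E ⊆ ⋃ x ∈ t, ball x ε), (t.card : ℝ≥0∞)

/-- Lower box scale of a set. -/
def lowerBoxScale {X : Type*} [MetricSpace X] (s : ℝ → ℝ → ℝ) (E : Set X) : ℝ≥0∞ :=
  ⨆ (α : ℝ) (_ : 0 < α ∧ Tendsto (fun ε : ℝ => coveringNumber E ε * ENNReal.ofReal (s α ε))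
      (𝓝[>] (0:ℝ)) (𝓝 (⊤ : ℝ≥0∞))), ENNReal.ofReal α

/-- Upper box scale of a set. -/
def upperBoxScale {X : Type*} [MetricSpace X] (s : ℝ → ℝ → ℝ) (E : Set X) : ℝ≥0∞ :=
  ⨅ (α : ℝ) (_ : 0 < α ∧ Tendsto (fun ε : ℝ => coveringNumber E ε * ENNReal.ofReal (s α ε))
      (𝓝[>] (0:ℝ)) (𝓝 (0 : ℝ≥0∞))), ENNReal.ofReal α

/-- `H_ε^φ(E)`: Hausdorff pre-measure at scale `ε`, via countable covers by balls of radii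
at most `ε`. -/
def hausdorffPre {X : Type*} [MetricSpace X] (φ : ℝ → ℝ) (E : Set X) (ε : ℝ) : ℝ≥0∞ :=
  ⨅ (c : ℕ → X) (r : ℕ → ℝ) (t : Set ℕ)
    (_ : (∀ n ∈ t, r n ∈ Set.Ioc (0:ℝ) ε) ∧ E ⊆ ⋃ n ∈ t, ball (c n) (r n)),
    ∑' n : t, ENNReal.ofReal (φ (r n))

/-- `H^φ(E) = lim_{ε→0} H_ε^φ(E)`. -/
def hausdorffMeasureOf {X : Type*} [MetricSpace X] (φ : ℝ → ℝ) (E : Set X) : ℝ≥0∞ :=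
  ⨆ (ε : ℝ) (_ : 0 < ε), hausdorffPre φ E ε

/-- Hausdorff scale of a set. -/
def hausdorffScale {X : Type*} [MetricSpace X] (s : ℝ → ℝ → ℝ) (E : Set X) : ℝ≥0∞ :=
  ⨆ (α : ℝ) (_ : 0 < α ∧ hausdorffMeasureOf (s α) E = ⊤), ENNReal.ofReal α

/-- Packing scale of a set, via countable covers and upper box scales. -/
def packingScale {X : Type*} [MetricSpace X] (s : ℝ → ℝ → ℝ) (A : Set X) : ℝ≥0∞ :=
  ⨅ (E : ℕ → Set X) (_ : (⋃ n, E n) = A), ⨆ n, upperBoxScale s (E n)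

/-- Lower local scale of a measure at a point. -/
def lowerLocalScale {X : Type*} [MetricSpace X] [MeasurableSpace X]
    (s : ℝ → ℝ → ℝ) (μ : Measure X) (x : X) : ℝ≥0∞ :=
  ⨆ (α : ℝ) (_ : 0 < α ∧ Tendsto (fun ε : ℝ => μ (ball x ε) / ENNReal.ofReal (s α ε))
      (𝓝[>] (0:ℝ)) (𝓝 (0 : ℝ≥0∞))), ENNReal.ofReal α

/-- Upper local scale of a measure at a point. -/
def upperLocalScale {X : Type*} [MetricSpace X] [MeasurableSpace X]
    (s : ℝ → ℝ → ℝ) (μ : Measure X) (x : X) : ℝ≥0∞ :=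
  ⨅ (α : ℝ) (_ : 0 < α ∧ Tendsto (fun ε : ℝ => μ (ball x ε) / ENNReal.ofReal (s α ε))
      (𝓝[>] (0:ℝ)) (𝓝 (⊤ : ℝ≥0∞))), ENNReal.ofReal α

/-- Scale of a measure: infimum of the scale over Borel sets of positive measure. -/
def measureScale {X : Type*} [MetricSpace X] [MeasurableSpace X]
    (sc : Set X → ℝ≥0∞) (μ : Measure X) : ℝ≥0∞ :=
  ⨅ (E : Set X) (_ : MeasurableSet E ∧ 0 < μ E), sc E

/-- `*`-scale of a measure: infimum of the scale over Borel sets of full measure. -/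
def measureScaleStar {X : Type*} [MetricSpace X] [MeasurableSpace X]
    (sc : Set X → ℝ≥0∞) (μ : Measure X) : ℝ≥0∞ :=
  ⨅ (E : Set X) (_ : MeasurableSet E ∧ μ Eᶜ = 0), sc E

/-- Quantization number `Q_μ(ε)`. -/
def quantizationNumber {X : Type*} [MetricSpace X] [MeasurableSpace X]
    (μ : Measure X) (ε : ℝ) : ℝ≥0∞ :=
  ⨅ (t : Finset X) (_ : ∫⁻ x, (⨅ c ∈ t, edist x c) ∂μ ≤ ENNReal.ofReal ε), (t.card : ℝ≥0∞)

/-- Lower quantization scale of a measure. -/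
def lowerQuantScale {X : Type*} [MetricSpace X] [MeasurableSpace X]
    (s : ℝ → ℝ → ℝ) (μ : Measure X) : ℝ≥0∞ :=
  ⨆ (α : ℝ) (_ : 0 < α ∧ Tendsto (fun ε : ℝ => quantizationNumber μ ε * ENNReal.ofReal (s α ε))
      (𝓝[>] (0:ℝ)) (𝓝 (⊤ : ℝ≥0∞))), ENNReal.ofReal α

/-- Upper quantization scale of a measure. -/
def upperQuantScale {X : Type*} [MetricSpace X] [MeasurableSpace X]
    (s : ℝ → ℝ → ℝ) (μ : Measure X) : ℝ≥0∞ :=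
  ⨅ (α : ℝ) (_ : 0 < α ∧ Tendsto (fun ε : ℝ => quantizationNumber μ ε * ENNReal.ofReal (s α ε))
      (𝓝[>] (0:ℝ)) (𝓝 (0 : ℝ≥0∞))), ENNReal.ofReal α

/-- Packing number `Ñ_ε(E)`: maximal cardinality of an `ε`-separated subset of `E`. -/
def packingNumber {X : Type*} [MetricSpace X] (E : Set X) (ε : ℝ) : ℝ≥0∞ :=
  ⨆ (t : Finset X) (_ : (↑t : Set X) ⊆ E ∧ ∀ x ∈ t, ∀ y ∈ t, x ≠ y → ε ≤ dist x y),
    (t.card : ℝ≥0∞)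

/-- `P_ε^φ(E)`: supremum of `Σ φ(r_i)` over `ε`-packs of `E` (pairwise disjoint balls of `E`,
centered in `E`, with radii at most `ε`). -/
def packingPre {X : Type*} [MetricSpace X] (φ : ℝ → ℝ) (E : Set X) (ε : ℝ) : ℝ≥0∞ :=
  ⨆ (t : Finset (X × ℝ)) (_ : (∀ p ∈ t, p.1 ∈ E ∧ p.2 ∈ Set.Ioc (0:ℝ) ε) ∧
      (↑t : Set (X × ℝ)).Pairwise fun p q => Disjoint (ball p.1 p.2 ∩ E) (ball q.1 q.2 ∩ E)),
    ∑ p ∈ t, ENNReal.ofReal (φ p.2)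

/-- The packing pre-measure `P_0^φ(E) = lim_{ε→0} P_ε^φ(E)`. -/
def packingPre0 {X : Type*} [MetricSpace X] (φ : ℝ → ℝ) (E : Set X) : ℝ≥0∞ :=
  ⨅ (ε : ℝ) (_ : 0 < ε), packingPre φ E ε

/-- The packing `φ`-measure `P^φ(E)`. -/
def packingMeasureOf {X : Type*} [MetricSpace X] (φ : ℝ → ℝ) (E : Set X) : ℝ≥0∞ :=
  ⨅ (F : ℕ → Set X) (_ : (⋃ n, F n) = E), ∑' n, packingPre0 φ (F n)


section ScalingHelpers

lemma eventually_nhdsGT_iff {P : ℝ → Prop} :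
    (∀ᶠ ε in 𝓝[>] (0:ℝ), P ε) ↔ ∃ θ : ℝ, 0 < θ ∧ ∀ ε : ℝ, 0 < ε → ε ≤ θ → P ε := by
  constructor
  · intro h
    rcases mem_nhdsGT_iff_exists_Ioc_subset.1 h with ⟨u, hu, hsub⟩
    exact ⟨u, hu, fun ε h1 h2 => hsub ⟨h1, h2⟩⟩
  · rintro ⟨θ, hθ, h⟩
    filter_upwards [Ioc_mem_nhdsGT hθ] with ε hε using h ε hε.1 hε.2

lemma eventually_mem_Ioo01 : ∀ᶠ ε in 𝓝[>] (0:ℝ), 0 < ε ∧ ε < 1 := by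
  filter_upwards [Ioo_mem_nhdsGT_of_mem (show (0:ℝ) ∈ Set.Ico (0:ℝ) 1 from ⟨le_rfl, one_pos⟩)]
    with ε hε using ⟨hε.1, hε.2⟩

lemma tendsto_rpow_nhdsGT_zero {p : ℝ} (hp : 0 < p) :
    Tendsto (fun ε : ℝ => ε ^ p) (𝓝[>] (0:ℝ)) (𝓝 0) := by
  have h := (Real.continuousAt_rpow_const 0 p (Or.inr hp.le)).tendsto
  rw [Real.zero_rpow hp.ne'] at h
  exact h.mono_left nhdsWithin_le_nhds

lemma tendsto_const_mul_nhdsGT {c : ℝ} (hc : 0 < c) :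
    Tendsto (fun ε : ℝ => c * ε) (𝓝[>] (0:ℝ)) (𝓝[>] (0:ℝ)) := by
  rw [tendsto_nhdsWithin_iff]
  constructor
  · have h : Tendsto (fun ε : ℝ => c * ε) (𝓝 0) (𝓝 (c * 0)) :=
      (continuous_const.mul continuous_id).tendsto 0
    rw [mul_zero] at h
    exact h.mono_left nhdsWithin_le_nhds
  · filter_upwards [self_mem_nhdsWithin] with ε hε
    exact mul_pos hc hε

variable {s : ℝ → ℝ → ℝ}

lemma IsScaling.pos' (hs : IsScaling s) {a ε : ℝ} (ha : 0 < a) (h0 : 0 < ε) (h1 : ε < 1) :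
    0 < s a ε := hs.1 a ha ε ⟨h0, h1⟩

lemma IsScaling.mono' (hs : IsScaling s) {a x y : ℝ} (ha : 0 < a) (hx : 0 < x) (hxy : x ≤ y)
    (hy : y < 1) : s a x ≤ s a y :=
  hs.2.1 a ha ⟨hx, lt_of_le_of_lt hxy hy⟩ ⟨lt_of_lt_of_le hx hxy, hy⟩ hxy

lemma scaling_arg_pow (hs : IsScaling s) {β a : ℝ} (hβ : 0 < β) (hβa : β < a) :
    ∃ κ : ℝ, 1 < κ ∧ ∀ᶠ ε in 𝓝[>] (0:ℝ), s a ε ≤ s β (ε ^ κ) := by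
  obtain ⟨l₀, hl₀, H⟩ := hs.2.2 a β hβ hβa
  refine ⟨(1 + l₀)/2, by linarith, ?_⟩
  have ht := (H ((1 + l₀)/2) ⟨by linarith, by linarith⟩).1
  have h1 := ht.eventually_lt_const zero_lt_one
  filter_upwards [h1, eventually_mem_Ioo01] with ε hlt hε
  obtain ⟨hε0, hε1⟩ := hε
  have hp : 0 < ε ^ ((1 + l₀)/2) := Real.rpow_pos_of_pos hε0 _
  have hp1 : ε ^ ((1 + l₀)/2) < 1 := Real.rpow_lt_one hε0.le hε1 (by linarith)
  exact le_of_lt ((div_lt_one (hs.pos' hβ hp hp1)).1 hlt)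

lemma scaling_val_pow (hs : IsScaling s) {β a : ℝ} (hβ : 0 < β) (hβa : β < a) :
    ∃ κ : ℝ, 1 < κ ∧ ∀ᶠ ε in 𝓝[>] (0:ℝ), s a ε ≤ (s β ε) ^ κ := by
  obtain ⟨l₀, hl₀, H⟩ := hs.2.2 a β hβ hβa
  refine ⟨(1 + l₀)/2, by linarith, ?_⟩
  have ht := (H ((1 + l₀)/2) ⟨by linarith, by linarith⟩).2
  have h1 := ht.eventually_lt_const zero_lt_one
  filter_upwards [h1, eventually_mem_Ioo01] with ε hlt hε
  obtain ⟨hε0, hε1⟩ := hε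
  have hp : 0 < (s β ε) ^ ((1 + l₀)/2) := Real.rpow_pos_of_pos (hs.pos' hβ hε0 hε1) _
  exact le_of_lt ((div_lt_one hp).1 hlt)

lemma rpow_le_self_of_le_one {ε κ : ℝ} (hε0 : 0 < ε) (hε1 : ε < 1) (hκ : 1 ≤ κ) :
    ε ^ κ ≤ ε := by
  calc ε ^ κ ≤ ε ^ (1:ℝ) := Real.rpow_le_rpow_of_exponent_ge hε0 hε1.le hκ
    _ = ε := Real.rpow_one ε

lemma scaling_le (hs : IsScaling s) {β a : ℝ} (hβ : 0 < β) (hβa : β < a) :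
    ∀ᶠ ε in 𝓝[>] (0:ℝ), s a ε ≤ s β ε := by
  obtain ⟨κ, hκ, h⟩ := scaling_arg_pow hs hβ hβa
  filter_upwards [h, eventually_mem_Ioo01] with ε h1 hε
  obtain ⟨hε0, hε1⟩ := hε
  refine h1.trans (hs.mono' hβ (Real.rpow_pos_of_pos hε0 _)
    (rpow_le_self_of_le_one hε0 hε1 hκ.le) hε1)

lemma scaling_tendsto_zero (hs : IsScaling s) {a : ℝ} (ha : 0 < a) :
    Tendsto (fun ε => s a ε) (𝓝[>] (0:ℝ)) (𝓝 0) := by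
  have hβ : 0 < a/2 := by linarith
  have hβa : a/2 < a := by linarith
  obtain ⟨l₀, hl₀, H⟩ := hs.2.2 a (a/2) hβ hβa
  set κ := (1 + l₀)/2 with hκdef
  have hκ : 1 < κ := by rw [hκdef]; linarith
  have ht := (H κ ⟨by rw [hκdef]; linarith, by rw [hκdef]; linarith⟩).1
  have upper : Tendsto (fun ε => (s a ε / s (a/2) (ε ^ κ)) * s (a/2) 2⁻¹)
      (𝓝[>] (0:ℝ)) (𝓝 0) := by
    simpa using ht.mul_const (s (a/2) 2⁻¹)
  refine squeeze_zero' ?_ ?_ upper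
  · filter_upwards [eventually_mem_Ioo01] with ε hε
    exact (hs.pos' ha hε.1 hε.2).le
  · have hhalf : ∀ᶠ ε in 𝓝[>] (0:ℝ), ε ≤ 2⁻¹ := by
      filter_upwards [Ioc_mem_nhdsGT (show (0:ℝ) < 2⁻¹ by norm_num)] with ε hε
      exact hε.2
    filter_upwards [eventually_mem_Ioo01, hhalf] with ε hε hε2
    obtain ⟨hε0, hε1⟩ := hε
    have hp0 : 0 < ε ^ κ := Real.rpow_pos_of_pos hε0 _
    have hple : ε ^ κ ≤ 2⁻¹ := (rpow_le_self_of_le_one hε0 hε1 hκ.le).trans hε2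
    have hs2 : 0 < s (a/2) (ε ^ κ) := hs.pos' hβ hp0 (lt_of_le_of_lt hple (by norm_num))
    have heq : s a ε = (s a ε / s (a/2) (ε ^ κ)) * s (a/2) (ε ^ κ) :=
      (div_mul_cancel₀ _ hs2.ne').symm
    refine heq.trans_le ?_
    exact mul_le_mul_of_nonneg_left
      (hs.mono' hβ hp0 hple (by norm_num)) (div_nonneg (hs.pos' ha hε0 hε1).le hs2.le)

lemma scaling_ratio_tendsto_zero (hs : IsScaling s) {β a : ℝ} (hβ : 0 < β) (hβa : β < a) :
    Tendsto (fun ε => s a ε / s β ε) (𝓝[>] (0:ℝ)) (𝓝 0) := by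
  obtain ⟨l₀, hl₀, H⟩ := hs.2.2 a β hβ hβa
  set κ := (1 + l₀)/2 with hκdef
  have hκ : 1 < κ := by rw [hκdef]; linarith
  have ht := (H κ ⟨by rw [hκdef]; linarith, by rw [hκdef]; linarith⟩).1
  refine squeeze_zero' ?_ ?_ ht
  · filter_upwards [eventually_mem_Ioo01] with ε hε
    exact div_nonneg (hs.pos' (hβ.trans hβa) hε.1 hε.2).le (hs.pos' hβ hε.1 hε.2).le
  · filter_upwards [eventually_mem_Ioo01] with ε hε
    obtain ⟨hε0, hε1⟩ := hε
    have hp0 : 0 < ε ^ κ := Real.rpow_pos_of_pos hε0 _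
    have hp1 : ε ^ κ < 1 := Real.rpow_lt_one hε0.le hε1 (by linarith)
    exact div_le_div_of_nonneg_left (hs.pos' (hβ.trans hβa) hε0 hε1).le
      (hs.pos' hβ hp0 hp1) (hs.mono' hβ hp0 (rpow_le_self_of_le_one hε0 hε1 hκ.le) hε1)

lemma measurable_finset_inf_edist {X : Type*} [MetricSpace X] [MeasurableSpace X]
    [BorelSpace X] (t : Finset X) :
    Measurable (fun x : X => ⨅ c ∈ t, edist x c) := by
  classical
  have heq : (fun x : X => ⨅ c ∈ t, edist x c) = fun x => t.inf (fun c => edist x c) := by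
    funext x; rw [Finset.inf_eq_iInf]
  rw [heq]; clear heq
  have hcont : Continuous (fun x : X => t.inf (fun c => edist x c)) := by
    induction t using Finset.induction_on with
    | empty => simpa [Finset.inf_empty] using continuous_const
    | insert _ _ h ih =>
        simp only [Finset.inf_insert]
        exact (continuous_id.edist continuous_const).min ih
  exact hcont.measurable

end ScalingHelpers

lemma pow_rpow_comm {x : ℝ} (hx : 0 ≤ x) (k : ℕ) (y : ℝ) : (x ^ k) ^ y = (x ^ y) ^ k := by
  rw [← Real.rpow_natCast x k, ← Real.rpow_mul hx, mul_comm, Real.rpow_mul hx, Real.rpow_natCast]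
section Part1

variable {X : Type*} [MetricSpace X] [MeasurableSpace X] [BorelSpace X]

lemma quant_tendsto_top_of_pos (μ : Measure X) [IsFiniteMeasure μ]
    {s : ℝ → ℝ → ℝ} (hs : IsScaling s) {β a : ℝ} (hβ : 0 < β) (hβa : β < a)
    (hA : μ {x | Tendsto (fun ε : ℝ => μ (ball x ε) / ENNReal.ofReal (s a ε))
        (𝓝[>] (0:ℝ)) (𝓝 0)} ≠ 0) :
    Tendsto (fun ε : ℝ => quantizationNumber μ ε * ENNReal.ofReal (s β ε))
      (𝓝[>] (0:ℝ)) (𝓝 ⊤) := by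
  classical
  have ha : 0 < a := hβ.trans hβa
  set F : ℕ → Set X := fun n => {x | ∀ ε : ℝ, 0 < ε → ε ≤ (2⁻¹:ℝ) ^ (n+1) →
      μ (ball x ε) ≤ ENNReal.ofReal (s a ε)} with hFdef
  have hAF : {x | Tendsto (fun ε : ℝ => μ (ball x ε) / ENNReal.ofReal (s a ε))
      (𝓝[>] (0:ℝ)) (𝓝 0)} ⊆ ⋃ n, F n := by
    intro x hx
    have h1 : ∀ᶠ ε in 𝓝[>] (0:ℝ),
        μ (ball x ε) / ENNReal.ofReal (s a ε) < 1 ∧ (0 < ε ∧ ε < 1) :=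
      (hx.eventually_lt_const zero_lt_one).and eventually_mem_Ioo01
    rcases eventually_nhdsGT_iff.1 h1 with ⟨θ, hθ0, hθ⟩
    obtain ⟨nn, hn⟩ := exists_pow_lt_of_lt_one hθ0 (show (2⁻¹:ℝ) < 1 by norm_num)
    refine mem_iUnion.2 ⟨nn, fun ε hε0 hεle => ?_⟩
    have hεθ : ε ≤ θ := by
      refine hεle.trans (le_of_lt (lt_of_le_of_lt ?_ hn))
      exact pow_le_pow_of_le_one (by norm_num) (by norm_num) (Nat.le_succ nn)
    obtain ⟨hlt, hε0', hε1⟩ := hθ ε hε0 hεθ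
    have hspos : 0 < s a ε := hs.pos' ha hε0 hε1
    have hb0 : ENNReal.ofReal (s a ε) ≠ 0 := (ENNReal.ofReal_pos.2 hspos).ne'
    have := (ENNReal.div_lt_iff (Or.inl hb0) (Or.inl ENNReal.ofReal_ne_top)).1 hlt
    simpa using this.le
  obtain ⟨n, hFn⟩ : ∃ n, μ (F n) ≠ 0 := by
    by_contra h
    push_neg at h
    exact hA (le_zero_iff.1 ((measure_mono hAF).trans
      (le_of_eq (measure_iUnion_null_iff.2 h))))
  set ε₀ : ℝ := (2⁻¹:ℝ) ^ (n+1) with hε₀def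
  have hε₀0 : 0 < ε₀ := by positivity
  set m := μ (F n) with hmdef
  have hmtop : m ≠ ⊤ := measure_ne_top μ _
  have hm20 : m / 2 ≠ 0 := by
    simp only [ne_eq, ENNReal.div_eq_zero_iff, not_or]
    exact ⟨hFn, by norm_num⟩
  have hm2top : m / 2 ≠ ⊤ := (ENNReal.half_le_self.trans_lt hmtop.lt_top).ne
  set m' := (m / 2).toReal with hm'def
  have hm' : 0 < m' := ENNReal.toReal_pos hm20 hm2top
  set K := 2 / m' with hKdef
  have hK : 0 < K := by positivity
  set γ := (β + a)/2 with hγdef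
  have hβγ : β < γ := by rw [hγdef]; linarith
  have hγa : γ < a := by rw [hγdef]; linarith
  have hγ0 : 0 < γ := hβ.trans hβγ
  obtain ⟨κ, hκ1, hchain⟩ := scaling_arg_pow hs hγ0 hγa
  have hw : Tendsto (fun ε : ℝ => 2*K*ε) (𝓝[>] (0:ℝ)) (𝓝[>] (0:ℝ)) := by
    simpa [mul_assoc] using tendsto_const_mul_nhdsGT (show (0:ℝ) < 2*K by positivity)
  have hchain' : ∀ᶠ ε in 𝓝[>] (0:ℝ), s a (2*K*ε) ≤ s γ ((2*K*ε) ^ κ) := hw.eventually hchain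
  have hsmall : ∀ᶠ ε in 𝓝[>] (0:ℝ), 2*K*ε ≤ ε₀ ∧ 2*K*ε < 1 := by
    rw [eventually_nhdsGT_iff]
    refine ⟨min ε₀ 2⁻¹ / (2*K), by positivity, fun ε hε0 hεle => ?_⟩
    have h2 : 2*K*ε ≤ min ε₀ 2⁻¹ := by
      rw [le_div_iff₀ (by positivity)] at hεle
      calc 2*K*ε = ε * (2*K) := by ring
        _ ≤ min ε₀ 2⁻¹ := hεle
    exact ⟨h2.trans (min_le_left _ _),
      lt_of_le_of_lt (h2.trans (min_le_right _ _)) (by norm_num)⟩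
  have hpow : ∀ᶠ ε in 𝓝[>] (0:ℝ), (2*K*ε) ^ κ ≤ ε := by
    have h0 : Tendsto (fun ε : ℝ => (2*K) ^ κ * ε ^ (κ - 1)) (𝓝[>] (0:ℝ)) (𝓝 0) := by
      have h := (tendsto_rpow_nhdsGT_zero (show (0:ℝ) < κ - 1 by linarith)).const_mul
        ((2*K) ^ (κ:ℝ))
      simpa using h
    filter_upwards [h0.eventually_lt_const zero_lt_one, self_mem_nhdsWithin] with ε hlt hε0
    replace hε0 : 0 < ε := hε0
    have hεκ : ε ^ κ = ε ^ (κ - 1) * ε := by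
      rw [← Real.rpow_add_one hε0.ne' (κ-1), sub_add_cancel]
    have heq : (2*K*ε) ^ κ = ((2*K) ^ κ * ε ^ (κ-1)) * ε := by
      rw [Real.mul_rpow (by positivity) hε0.le, hεκ]; ring
    calc (2*K*ε) ^ κ = ((2*K) ^ κ * ε ^ (κ-1)) * ε := heq
      _ ≤ 1 * ε := mul_le_mul_of_nonneg_right hlt.le hε0.le
      _ = ε := one_mul ε
  have key : ∀ᶠ ε in 𝓝[>] (0:ℝ),
      (m/2) * (ENNReal.ofReal (s β ε) / ENNReal.ofReal (s γ ε)) ≤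
        quantizationNumber μ ε * ENNReal.ofReal (s β ε) := by
    filter_upwards [hchain', hsmall, hpow, eventually_mem_Ioo01] with ε hch hsm hpw hε
    obtain ⟨hε0, hε1⟩ := hε
    obtain ⟨hsm1, hsm2⟩ := hsm
    set r := K * ε with hrdef
    have hr0 : 0 < r := by positivity
    have h2r : 2*r = 2*K*ε := by rw [hrdef]; ring
    have h2r0 : 0 < 2*r := by positivity
    have h2r1 : 2*r < 1 := by rw [h2r]; exact hsm2
    have hsa2r : s a (2*r) ≤ s γ ε := by
      rw [h2r]
      refine hch.trans (hs.mono' hγ0 (Real.rpow_pos_of_pos (by positivity) _) hpw hε1)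
    have hsa2rpos : 0 < s a (2*r) := hs.pos' ha h2r0 h2r1
    have hQbound : (m/2) / ENNReal.ofReal (s a (2*r)) ≤ quantizationNumber μ ε := by
      refine le_iInf fun t => le_iInf fun hcond => ?_
      set f : X → ℝ≥0∞ := fun x => ⨅ c ∈ t, edist x c with hfdef
      have hfm : Measurable f := measurable_finset_inf_edist t
      have hmar : μ {x | ENNReal.ofReal r ≤ f x} ≤ m/2 := by
        have h1 : ENNReal.ofReal r * μ {x | ENNReal.ofReal r ≤ f x} ≤ ENNReal.ofReal ε :=
          le_trans (mul_meas_ge_le_lintegral₀ hfm.aemeasurable _) hcond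
        have h2 : μ {x | ENNReal.ofReal r ≤ f x} ≤ ENNReal.ofReal ε / ENNReal.ofReal r :=
          (ENNReal.le_div_iff_mul_le (Or.inl (ENNReal.ofReal_pos.2 hr0).ne')
            (Or.inl ENNReal.ofReal_ne_top)).2 (by rwa [mul_comm])
        refine h2.trans ?_
        rw [← ENNReal.ofReal_div_of_pos hr0]
        have hεr : ε / r = m' / 2 := by
          rw [hrdef, hKdef]
          field_simp
        rw [hεr]
        calc ENNReal.ofReal (m'/2) ≤ ENNReal.ofReal m' := ENNReal.ofReal_le_ofReal (by linarith)
          _ = m/2 := ENNReal.ofReal_toReal hm2top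
      have hcover : m ≤ (t.card : ℝ≥0∞) * ENNReal.ofReal (s a (2*r)) + m/2 := by
        have hsplit : μ (F n) ≤ μ (F n ∩ {x | f x < ENNReal.ofReal r}) +
            μ {x | ENNReal.ofReal r ≤ f x} := by
          refine le_trans (measure_mono ?_) (measure_union_le _ _)
          intro x hx
          rcases lt_or_ge (f x) (ENNReal.ofReal r) with h | h
          · exact Or.inl ⟨hx, h⟩
          · exact Or.inr h
        have hG : μ (F n ∩ {x | f x < ENNReal.ofReal r}) ≤
            (t.card : ℝ≥0∞) * ENNReal.ofReal (s a (2*r)) := by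
          have hsub : F n ∩ {x | f x < ENNReal.ofReal r} ⊆ ⋃ c ∈ t, (ball c r ∩ F n) := by
            rintro x ⟨hxF, hxf⟩
            have hxf2 : (⨅ c ∈ t, edist x c) < ENNReal.ofReal r := hxf
            obtain ⟨c, hc⟩ := iInf_lt_iff.1 hxf2
            obtain ⟨hct, hcd⟩ := iInf_lt_iff.1 hc
            refine mem_biUnion hct ⟨?_, hxF⟩
            rw [mem_ball]
            exact edist_lt_ofReal.1 hcd
          refine le_trans (measure_mono hsub) (le_trans (measure_biUnion_finset_le _ _) ?_)
          have hball : ∀ c ∈ t, μ (ball c r ∩ F n) ≤ ENNReal.ofReal (s a (2*r)) := by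
            intro c _
            rcases Set.eq_empty_or_nonempty (ball c r ∩ F n) with he | ⟨y, hyb, hyF⟩
            · simp [he]
            · have hsub2 : ball c r ∩ F n ⊆ ball y (2*r) := by
                intro z hz
                have h1' : dist z c < r := mem_ball.1 hz.1
                have h2' : dist y c < r := mem_ball.1 hyb
                rw [mem_ball]
                calc dist z y ≤ dist z c + dist c y := dist_triangle _ _ _
                  _ < r + r := by rw [dist_comm c y]; exact add_lt_add h1' h2'
                  _ = 2*r := by ring
              refine le_trans (measure_mono hsub2) ?_
              exact hyF (2*r) h2r0 (by rw [h2r]; exact hsm1)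
          calc ∑ c ∈ t, μ (ball c r ∩ F n) ≤ ∑ _c ∈ t, ENNReal.ofReal (s a (2*r)) :=
                Finset.sum_le_sum hball
            _ = (t.card : ℝ≥0∞) * ENNReal.ofReal (s a (2*r)) := by
                rw [Finset.sum_const, nsmul_eq_mul]
        calc m ≤ _ := hsplit
          _ ≤ _ := add_le_add hG hmar
      have hhalf : m/2 ≤ (t.card : ℝ≥0∞) * ENNReal.ofReal (s a (2*r)) := by
        have h3 := tsub_le_iff_right.2 hcover
        rwa [ENNReal.sub_half hmtop] at h3
      rwa [ENNReal.div_le_iff (ENNReal.ofReal_pos.2 hsa2rpos).ne' ENNReal.ofReal_ne_top]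
    have hle : ENNReal.ofReal (s a (2*r)) ≤ ENNReal.ofReal (s γ ε) :=
      ENNReal.ofReal_le_ofReal hsa2r
    have hR : (m/2) * (ENNReal.ofReal (s β ε) / ENNReal.ofReal (s γ ε)) ≤
        ((m/2) / ENNReal.ofReal (s a (2*r))) * ENNReal.ofReal (s β ε) := by
      have heq2 : ((m/2) / ENNReal.ofReal (s a (2*r))) * ENNReal.ofReal (s β ε) =
          (m/2) * (ENNReal.ofReal (s β ε) / ENNReal.ofReal (s a (2*r))) := by
        simp only [div_eq_mul_inv]; ring
      rw [heq2]
      exact mul_le_mul_right (ENNReal.div_le_div_left hle _) _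
    calc (m/2) * (ENNReal.ofReal (s β ε) / ENNReal.ofReal (s γ ε)) ≤
          ((m/2) / ENNReal.ofReal (s a (2*r))) * ENNReal.ofReal (s β ε) := hR
      _ ≤ quantizationNumber μ ε * ENNReal.ofReal (s β ε) := mul_le_mul_left hQbound _
  have hRtop : Tendsto (fun ε => (m/2) * (ENNReal.ofReal (s β ε) / ENNReal.ofReal (s γ ε)))
      (𝓝[>] (0:ℝ)) (𝓝 ⊤) := by
    have h1 : Tendsto (fun ε => s γ ε / s β ε) (𝓝[>] (0:ℝ)) (𝓝[>] (0:ℝ)) := by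
      rw [tendsto_nhdsWithin_iff]
      refine ⟨scaling_ratio_tendsto_zero hs hβ hβγ, ?_⟩
      filter_upwards [eventually_mem_Ioo01] with ε hε
      exact div_pos (hs.pos' hγ0 hε.1 hε.2) (hs.pos' hβ hε.1 hε.2)
    have hreal : Tendsto (fun ε => s β ε / s γ ε) (𝓝[>] (0:ℝ)) atTop := by
      have h2 := h1.inv_tendsto_nhdsGT_zero
      refine h2.congr fun ε => ?_
      simp [Pi.inv_apply, inv_div]
    have h2 : Tendsto (fun ε => ENNReal.ofReal (s β ε / s γ ε)) (𝓝[>] (0:ℝ)) (𝓝 ⊤) :=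
      ENNReal.tendsto_ofReal_atTop.comp hreal
    have h3 : Tendsto (fun ε => ENNReal.ofReal (s β ε) / ENNReal.ofReal (s γ ε))
        (𝓝[>] (0:ℝ)) (𝓝 ⊤) := by
      refine h2.congr' ?_
      filter_upwards [eventually_mem_Ioo01] with ε hε
      exact ENNReal.ofReal_div_of_pos (hs.pos' hγ0 hε.1 hε.2)
    have h4 : Tendsto (fun ε => (m/2) * (ENNReal.ofReal (s β ε) / ENNReal.ofReal (s γ ε)))
        (𝓝[>] (0:ℝ)) (𝓝 ((m/2) * ⊤)) :=
      ENNReal.Tendsto.const_mul h3 (Or.inl (by simp))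
    rwa [ENNReal.mul_top hm20] at h4
  exact tendsto_nhds_top_mono hRtop key

end Part1
section Part1b

variable {X : Type*} [MetricSpace X] [MeasurableSpace X] [BorelSpace X]

lemma part1_essSup_le (μ : Measure X) [IsFiniteMeasure μ]
    {s : ℝ → ℝ → ℝ} (hs : IsScaling s) :
    essSup (lowerLocalScale s μ) μ ≤ lowerQuantScale s μ := by
  classical
  set L := lowerQuantScale s μ with hLdef
  have main : ∀ q : ℚ, μ {x | 0 < (q:ℝ) ∧ L < ENNReal.ofReal (q:ℝ) ∧
      Tendsto (fun ε : ℝ => μ (ball x ε) / ENNReal.ofReal (s (q:ℝ) ε))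
        (𝓝[>] (0:ℝ)) (𝓝 0)} = 0 := by
    intro q
    by_contra hq
    obtain ⟨x₀, hq0, hLq, -⟩ := nonempty_of_measure_ne_zero hq
    have hApos : μ {x | Tendsto (fun ε : ℝ => μ (ball x ε) / ENNReal.ofReal (s (q:ℝ) ε))
        (𝓝[>] (0:ℝ)) (𝓝 0)} ≠ 0 := by
      intro h0
      exact hq (measure_mono_null (fun x hx => hx.2.2) h0)
    have hLtop : L ≠ ⊤ := hLq.ne_top
    have hqL : L.toReal < (q:ℝ) := (ENNReal.lt_ofReal_iff_toReal_lt hLtop).1 hLq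
    set β : ℝ := (L.toReal + q)/2 with hβdef
    have htR : (0:ℝ) ≤ L.toReal := ENNReal.toReal_nonneg
    have hβ0 : 0 < β := by rw [hβdef]; linarith
    have hβq : β < q := by rw [hβdef]; linarith
    have hLβ : L < ENNReal.ofReal β := by
      rw [ENNReal.lt_ofReal_iff_toReal_lt hLtop, hβdef]; linarith
    have htop := quant_tendsto_top_of_pos μ hs hβ0 hβq hApos
    have hle : ENNReal.ofReal β ≤ L := by
      rw [hLdef, lowerQuantScale]
      exact le_iSup₂ (f := fun (α : ℝ) (_ : 0 < α ∧ Tendsto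
        (fun ε : ℝ => quantizationNumber μ ε * ENNReal.ofReal (s α ε))
        (𝓝[>] (0:ℝ)) (𝓝 (⊤:ℝ≥0∞))) => ENNReal.ofReal α) β ⟨hβ0, htop⟩
    exact absurd hle (not_le.2 hLβ)
  have hsub : {x | ¬ lowerLocalScale s μ x ≤ L} ⊆ ⋃ q : ℚ,
      {x | 0 < (q:ℝ) ∧ L < ENNReal.ofReal (q:ℝ) ∧
        Tendsto (fun ε : ℝ => μ (ball x ε) / ENNReal.ofReal (s (q:ℝ) ε))
          (𝓝[>] (0:ℝ)) (𝓝 0)} := by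
    intro x hx
    rw [mem_setOf_eq, not_le, lowerLocalScale] at hx
    obtain ⟨α, hα⟩ := lt_iSup_iff.1 hx
    obtain ⟨⟨hα0, htend⟩, hLα⟩ := lt_iSup_iff.1 hα
    have hLtop : L ≠ ⊤ := hLα.ne_top
    have h1 : L.toReal < α := (ENNReal.lt_ofReal_iff_toReal_lt hLtop).1 hLα
    obtain ⟨q, hq1, hq2⟩ := exists_rat_btwn (max_lt h1 hα0)
    have hq0 : 0 < (q:ℝ) := lt_of_le_of_lt (le_max_right _ _) hq1
    have hLq : L < ENNReal.ofReal (q:ℝ) := by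
      rw [ENNReal.lt_ofReal_iff_toReal_lt hLtop]
      exact lt_of_le_of_lt (le_max_left _ _) hq1
    have hle := scaling_le hs hq0 hq2
    refine mem_iUnion.2 ⟨q, hq0, hLq, ?_⟩
    refine tendsto_of_tendsto_of_tendsto_of_le_of_le' tendsto_const_nhds htend
      (Eventually.of_forall fun ε => zero_le) ?_
    filter_upwards [hle] with ε h1'
    exact ENNReal.div_le_div_left (ENNReal.ofReal_le_ofReal h1') _
  have hBad : μ {x | ¬ lowerLocalScale s μ x ≤ L} = 0 :=
    measure_mono_null hsub (measure_iUnion_null_iff.2 main)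
  exact essSup_le_of_ae_le _ (ae_iff.2 hBad)

end Part1b
section Part2

variable {X : Type*} [MetricSpace X] [MeasurableSpace X] [BorelSpace X]

set_option maxHeartbeats 4000000 in
lemma bad_set_null (μ : Measure X) [IsFiniteMeasure μ] [TopologicalSpace.SeparableSpace X]
    {s : ℝ → ℝ → ℝ} (hs : IsScaling s) {α q : ℝ} (hα : 0 < α) (hαq : α < q)
    (hQ : Tendsto (fun e : ℝ => quantizationNumber μ e * ENNReal.ofReal (s α e))
      (𝓝[>] (0:ℝ)) (𝓝 0)) (M : ℕ) :
    μ {x | ∃ᶠ ε in 𝓝[>] (0:ℝ), μ (ball x ε) ≤ (M:ℝ≥0∞) * ENNReal.ofReal (s q ε)} = 0 := by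
  classical
  set α' := α + (q - α)/3 with hα'def
  set α'' := α + 2*(q - α)/3 with hα''def
  have hα'0 : 0 < α' := by rw [hα'def]; linarith
  have hαα' : α < α' := by rw [hα'def]; linarith
  have hα'α'' : α' < α'' := by rw [hα'def, hα''def]; linarith
  have hα''q : α'' < q := by rw [hα''def]; linarith
  have hα''0 : 0 < α'' := hα'0.trans hα'α''
  obtain ⟨κ', hκ'1, hEv1⟩ := scaling_arg_pow hs hα'0 hα'α''
  obtain ⟨lam, hlam1, hEv2⟩ := scaling_val_pow hs hα''0 hα''q
  obtain ⟨κ₅, hκ₅1, hEv3raw⟩ := scaling_arg_pow hs hα hαα'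
  rcases eventually_nhdsGT_iff.1 hEv1 with ⟨θ₁, hθ₁0, hθ₁⟩
  rcases eventually_nhdsGT_iff.1 hEv2 with ⟨θ₂, hθ₂0, hθ₂⟩
  rcases eventually_nhdsGT_iff.1 hEv3raw with ⟨θ₃, hθ₃0, hθ₃⟩
  rcases eventually_nhdsGT_iff.1 (hQ.eventually_lt_const zero_lt_one) with ⟨e₀, he₀0, he₀⟩
  rcases eventually_nhdsGT_iff.1
    ((scaling_tendsto_zero hs hα).eventually_lt_const zero_lt_one) with ⟨θ₄, hθ₄0, hθ₄⟩
  -- choose ρ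
  have hρex : ∀ᶠ ρ in 𝓝[>] (0:ℝ),
      (0 < ρ ∧ 4*ρ < 1) ∧ 4*ρ ≤ θ₃ ∧ (4*ρ)^κ₅ < min e₀ θ₄ := by
    have h4 : Tendsto (fun ρ : ℝ => 4*ρ) (𝓝[>] (0:ℝ)) (𝓝[>] (0:ℝ)) :=
      tendsto_const_mul_nhdsGT (by norm_num)
    have h4κ : Tendsto (fun ρ : ℝ => (4*ρ)^κ₅) (𝓝[>] (0:ℝ)) (𝓝 0) :=
      (tendsto_rpow_nhdsGT_zero (by linarith)).comp h4
    refine Filter.Eventually.and (Filter.Eventually.and ?_ ?_) (Filter.Eventually.and ?_ ?_)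
    · exact eventually_mem_Ioo01.mono fun ρ hρ => hρ.1
    · exact (h4.eventually eventually_mem_Ioo01).mono fun ρ hρ => hρ.2
    · exact (h4.eventually (Filter.eventually_of_mem (Ioc_mem_nhdsGT hθ₃0)
        (fun w hw => hw.2)))
    · exact h4κ.eventually_lt_const (lt_min he₀0 hθ₄0)
  obtain ⟨ρ, ⟨hρ0, h4ρ1⟩, h4ρθ₃, h4ρmin⟩ := hρex.exists
  have h4ρe₀ : (4*ρ)^κ₅ ≤ e₀ := (h4ρmin.trans_le (min_le_left _ _)).le
  have h4ρθ₄ : (4*ρ)^κ₅ ≤ θ₄ := (h4ρmin.trans_le (min_le_right _ _)).le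
  -- sequences
  set r : ℕ → ℝ := fun k => ρ * (2⁻¹)^k with hrdef
  set E : ℕ → ℝ := fun k => (4 * r k)^κ₅ with hEdef
  have hr0 : ∀ k, 0 < r k := fun k => by
    have : (0:ℝ) < (2⁻¹:ℝ)^k := by positivity
    rw [hrdef]; positivity
  have h4rle : ∀ k, 4 * r k ≤ 4 * ρ := by
    intro k
    have h1 : (2⁻¹:ℝ)^k ≤ 1 := pow_le_one₀ (by norm_num) (by norm_num)
    rw [hrdef]
    nlinarith [hρ0]
  have h4r0 : ∀ k, 0 < 4 * r k := fun k => by linarith [hr0 k]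
  have hE0 : ∀ k, 0 < E k := fun k => Real.rpow_pos_of_pos (h4r0 k) _
  have hEle : ∀ k, E k ≤ (4*ρ)^κ₅ := fun k =>
    Real.rpow_le_rpow (h4r0 k).le (h4rle k) (by linarith)
  have hEe₀ : ∀ k, E k ≤ e₀ := fun k => (hEle k).trans h4ρe₀
  have hEθ₄ : ∀ k, E k ≤ θ₄ := fun k => (hEle k).trans h4ρθ₄
  have hsαE1 : ∀ k, s α (E k) ≤ 1 := fun k => (hθ₄ (E k) (hE0 k) (hEθ₄ k)).le
  have hE1 : ∀ k, E k < 1 := by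
    intro k
    refine lt_of_le_of_lt (hEle k) ?_
    exact Real.rpow_lt_one (by linarith) h4ρ1 (by linarith)
  have hQE : ∀ k, quantizationNumber μ (E k) * ENNReal.ofReal (s α (E k)) ≤ 1 :=
    fun k => (he₀ (E k) (hE0 k) (hEe₀ k)).le
  have hsαEpos : ∀ k, 0 < s α (E k) := fun k => hs.pos' hα (hE0 k) (hE1 k)
  have hQfin : ∀ k, quantizationNumber μ (E k) ≠ ⊤ := by
    intro k htp
    have h1 := hQE k
    rw [htp, ENNReal.top_mul (ENNReal.ofReal_pos.2 (hsαEpos k)).ne'] at h1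
    exact absurd h1 (by simp)
  have htex : ∀ k, ∃ tt : Finset X,
      (∫⁻ x, (⨅ c ∈ tt, edist x c) ∂μ ≤ ENNReal.ofReal (E k)) ∧
      (tt.card : ℝ≥0∞) ≤ quantizationNumber μ (E k) + 1 := by
    intro k
    have hlt : quantizationNumber μ (E k) < quantizationNumber μ (E k) + 1 :=
      ENNReal.lt_add_right (hQfin k) one_ne_zero
    conv at hlt => lhs; rw [quantizationNumber]
    obtain ⟨tt, htt⟩ := iInf_lt_iff.1 hlt
    obtain ⟨hcond, hcard⟩ := iInf_lt_iff.1 htt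
    exact ⟨tt, hcond, hcard.le⟩
  choose t ht1 ht2 using htex
  -- geometric constants
  set c₂ : ℝ := (2⁻¹:ℝ)^(κ₅ - 1) with hc₂def
  have hc₂0 : 0 < c₂ := Real.rpow_pos_of_pos (by norm_num) _
  have hc₂1 : c₂ < 1 := Real.rpow_lt_one (by norm_num) (by norm_num) (by linarith)
  set D : ℝ := (4*ρ)^κ₅/ρ with hDdef
  have hD0 : 0 < D := by
    rw [hDdef]
    exact div_pos (Real.rpow_pos_of_pos (by linarith) _) hρ0
  have hgeo : ∀ k, E k / r k = D * c₂^k := by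
    intro k
    have hhalf : ((2⁻¹:ℝ)^κ₅) = c₂ * 2⁻¹ := by
      rw [hc₂def, ← Real.rpow_add_one (by norm_num : (2⁻¹:ℝ) ≠ 0) (κ₅ - 1), sub_add_cancel]
    have h1 : E k = (4*ρ)^κ₅ * (c₂ * 2⁻¹)^k := by
      rw [hEdef]
      have h2 : 4 * (ρ * (2⁻¹:ℝ)^k) = (4*ρ) * (2⁻¹)^k := by ring
      simp only [hrdef]
      rw [h2, Real.mul_rpow (by linarith) (by positivity),
        pow_rpow_comm (by norm_num) k κ₅, hhalf]
    have hpk : (0:ℝ) < (2⁻¹:ℝ)^k := by positivity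
    rw [h1, hrdef, hDdef, mul_pow]
    field_simp
    try ring
  -- Eset and null complement
  set Eset : ℕ → Set X := fun K =>
    {x | ∀ k, K ≤ k → (⨅ c ∈ t k, edist x c) < ENNReal.ofReal (r k)} with hEsetdef
  have hmar : ∀ k, μ {x | ENNReal.ofReal (r k) ≤ ⨅ c ∈ t k, edist x c} ≤
      ENNReal.ofReal (E k / r k) := by
    intro k
    have hfm := measurable_finset_inf_edist (X := X) (t k)
    have h1 : ENNReal.ofReal (r k) * μ {x | ENNReal.ofReal (r k) ≤ ⨅ c ∈ t k, edist x c} ≤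
        ENNReal.ofReal (E k) :=
      le_trans (mul_meas_ge_le_lintegral₀ (μ := μ) hfm.aemeasurable _) (ht1 k)
    have h2 : μ {x | ENNReal.ofReal (r k) ≤ ⨅ c ∈ t k, edist x c} ≤
        ENNReal.ofReal (E k) / ENNReal.ofReal (r k) :=
      (ENNReal.le_div_iff_mul_le (Or.inl (ENNReal.ofReal_pos.2 (hr0 k)).ne')
        (Or.inl ENNReal.ofReal_ne_top)).2 (by rwa [mul_comm])
    rwa [← ENNReal.ofReal_div_of_pos (hr0 k)] at h2
  set A₀ : ℝ≥0∞ := ENNReal.ofReal D * (1 - ENNReal.ofReal c₂)⁻¹ with hA₀def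
  have hA₀top : A₀ ≠ ⊤ := by
    rw [hA₀def]
    refine ENNReal.mul_ne_top ENNReal.ofReal_ne_top (ENNReal.inv_ne_top.2 ?_)
    have : ENNReal.ofReal c₂ < 1 := by rwa [ENNReal.ofReal_lt_one]
    exact (tsub_pos_iff_lt.2 this).ne'
  have htail : ∀ K : ℕ, μ ((Eset K)ᶜ) ≤ A₀ * (ENNReal.ofReal c₂)^K := by
    intro K
    have hsub : (Eset K)ᶜ ⊆ ⋃ j : ℕ,
        {x | ENNReal.ofReal (r (K+j)) ≤ ⨅ c ∈ t (K+j), edist x c} := by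
      intro x hx
      rw [hEsetdef, mem_compl_iff, mem_setOf_eq] at hx
      push_neg at hx
      obtain ⟨k, hKk, hk⟩ := hx
      refine mem_iUnion.2 ⟨k - K, ?_⟩
      rw [Nat.add_sub_cancel' hKk]
      exact hk
    refine le_trans (measure_mono hsub) (le_trans (measure_iUnion_le _) ?_)
    have hterm : ∀ j : ℕ, μ {x | ENNReal.ofReal (r (K+j)) ≤ ⨅ c ∈ t (K+j), edist x c}
        ≤ (ENNReal.ofReal D * (ENNReal.ofReal c₂)^K) * (ENNReal.ofReal c₂)^j := by
      intro j
      refine (hmar (K+j)).trans ?_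
      rw [hgeo (K+j), ENNReal.ofReal_mul hD0.le, ENNReal.ofReal_pow hc₂0.le, pow_add]
      exact le_of_eq (by ring)
    refine le_trans (ENNReal.tsum_le_tsum hterm) ?_
    rw [ENNReal.tsum_mul_left, ENNReal.tsum_geometric, hA₀def]
    exact le_of_eq (by ring)
  set C := {x | ∃ᶠ ε in 𝓝[>] (0:ℝ), μ (ball x ε) ≤ (M:ℝ≥0∞) * ENNReal.ofReal (s q ε)}
    with hCdef
  by_contra hC
  obtain ⟨K, hK⟩ : ∃ K, μ (C ∩ Eset K) ≠ 0 := by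
    by_contra h
    push_neg at h
    apply hC
    have hdec : C ⊆ (⋂ K, (Eset K)ᶜ) ∪ ⋃ K, (C ∩ Eset K) := by
      intro x hx
      by_cases hxE : ∃ K, x ∈ Eset K
      · obtain ⟨K, hKm⟩ := hxE; exact Or.inr (mem_iUnion.2 ⟨K, hx, hKm⟩)
      · push_neg at hxE; exact Or.inl (mem_iInter.2 fun K => hxE K)
    refine le_zero_iff.1 (le_trans (measure_mono hdec) (le_trans (measure_union_le _ _) ?_))
    have h1 : μ (⋂ K, (Eset K)ᶜ) = 0 := by
      have hle : ∀ K : ℕ, μ (⋂ K', (Eset K')ᶜ) ≤ A₀ * (ENNReal.ofReal c₂)^K :=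
        fun K => (measure_mono (iInter_subset _ K)).trans (htail K)
      have htend : Tendsto (fun K : ℕ => A₀ * (ENNReal.ofReal c₂)^K) atTop (𝓝 0) := by
        have hx1 : ENNReal.ofReal c₂ < 1 := by rwa [ENNReal.ofReal_lt_one]
        have hp := ENNReal.tendsto_pow_atTop_nhds_zero_of_lt_one hx1
        have h5 : Tendsto (fun K : ℕ => A₀ * (ENNReal.ofReal c₂)^K) atTop (𝓝 (A₀ * 0)) :=
          ENNReal.Tendsto.const_mul hp (Or.inr hA₀top)
        simpa using h5
      exact le_antisymm (ge_of_tendsto' htend hle) zero_le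
    have h2 : μ (⋃ K, C ∩ Eset K) = 0 := measure_iUnion_null_iff.2 h
    simp [h1, h2]
  -- radii are antitone
  have hrmono : ∀ i j : ℕ, i ≤ j → r j ≤ r i := by
    intro i j hij
    simp only [hrdef]
    exact mul_le_mul_of_nonneg_left
      (pow_le_pow_of_le_one (by norm_num) (by norm_num) hij) hρ0.le
  -- Covering claim
  have hcov : ∀ ε : ℝ, 0 < ε → ε < 2 * r K → ∃ T : Finset X,
      (↑T : Set X) ⊆ Eset K ∧ (Eset K ⊆ ⋃ y ∈ T, ball y ε) ∧
      (T.card : ℝ≥0∞) * ENNReal.ofReal (s α' ε) ≤ 2 := by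
    intro ε hε0 hεlt
    have hex : ∃ k : ℕ, 2 * r (k+1) ≤ ε := by
      obtain ⟨n, hn⟩ := exists_pow_lt_of_lt_one (show (0:ℝ) < ε/ρ by positivity)
        (show (2⁻¹:ℝ) < 1 by norm_num)
      refine ⟨n, ?_⟩
      have heq : 2 * r (n+1) = ρ * (2⁻¹:ℝ)^n := by
        simp only [hrdef, pow_succ]; ring
      rw [heq]
      have h2 := (lt_div_iff₀ hρ0).1 hn
      nlinarith
    set k := Nat.find hex with hkdef
    have hk1 : 2 * r (k+1) ≤ ε := Nat.find_spec hex
    have hKk : K ≤ k := by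
      by_contra hcon
      push_neg at hcon
      have h1 : r K ≤ r (k+1) := hrmono (k+1) K (by omega)
      linarith
    have hk2 : ε < 2 * r k := by
      rcases Nat.eq_zero_or_pos k with h0 | hpos
      · have hrKk : r K = r k := congrArg r (by omega)
        rw [← hrKk]; exact hεlt
      · have hmin := Nat.find_min hex (show k - 1 < k by omega)
        rw [show k - 1 + 1 = k by omega] at hmin
        exact not_le.1 hmin
    have hnear : ∀ x ∈ Eset K, ∃ c ∈ t (k+1), dist x c < r (k+1) := by
      intro x hx
      have hx2 : (⨅ c ∈ t (k+1), edist x c) < ENNReal.ofReal (r (k+1)) := hx (k+1) (by omega)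
      obtain ⟨c, hc⟩ := iInf_lt_iff.1 hx2
      obtain ⟨hct, hcd⟩ := iInf_lt_iff.1 hc
      exact ⟨c, hct, edist_lt_ofReal.1 hcd⟩
    set tsel := (t (k+1)).filter (fun c => (ball c (r (k+1)) ∩ Eset K).Nonempty) with htseldef
    set pick : X → X := fun c =>
      if h : (ball c (r (k+1)) ∩ Eset K).Nonempty then h.choose else c with hpickdef
    have hpickmem : ∀ c ∈ tsel, pick c ∈ ball c (r (k+1)) ∩ Eset K := by
      intro c hc
      have hne := (Finset.mem_filter.1 hc).2
      simp only [hpickdef, dif_pos hne]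
      exact hne.choose_spec
    set T := tsel.image pick with hTdef
    have hTsub : (↑T : Set X) ⊆ Eset K := by
      intro y hy
      rw [hTdef, Finset.coe_image] at hy
      obtain ⟨c, hc, rfl⟩ := hy
      exact (hpickmem c hc).2
    have hTcov : Eset K ⊆ ⋃ y ∈ T, ball y ε := by
      intro x hx
      obtain ⟨c, hct, hcd⟩ := hnear x hx
      have hcnon : (ball c (r (k+1)) ∩ Eset K).Nonempty :=
        ⟨x, mem_ball.2 hcd, hx⟩
      have hctsel : c ∈ tsel := Finset.mem_filter.2 ⟨hct, hcnon⟩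
      refine mem_biUnion (Finset.mem_image_of_mem pick hctsel) ?_
      have hpc : dist (pick c) c < r (k+1) := mem_ball.1 (hpickmem c hctsel).1
      rw [mem_ball]
      calc dist x (pick c) ≤ dist x c + dist c (pick c) := dist_triangle _ _ _
        _ < r (k+1) + r (k+1) := by rw [dist_comm c (pick c)]; exact add_lt_add hcd hpc
        _ = 2 * r (k+1) := by ring
        _ ≤ ε := hk1
    have hcard : (T.card : ℝ≥0∞) ≤ quantizationNumber μ (E (k+1)) + 1 := by
      refine le_trans ?_ (ht2 (k+1))
      have h1 : T.card ≤ (t (k+1)).card :=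
        le_trans (Finset.card_image_le) (Finset.card_filter_le _ _)
      exact_mod_cast Nat.cast_le.2 h1
    refine ⟨T, hTsub, hTcov, ?_⟩
    have h2rk : 2 * r k = 4 * r (k+1) := by
      simp only [hrdef, pow_succ]; ring
    have h4rk1_1 : 4 * r (k+1) < 1 := lt_of_le_of_lt (h4rle (k+1)) h4ρ1
    have hchain : s α' ε ≤ s α (E (k+1)) := by
      have h1 : s α' ε ≤ s α' (4 * r (k+1)) := by
        refine hs.mono' hα'0 hε0 ?_ h4rk1_1
        rw [← h2rk]; exact hk2.le
      refine h1.trans ?_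
      exact hθ₃ (4 * r (k+1)) (h4r0 (k+1)) ((h4rle (k+1)).trans h4ρθ₃)
    calc (T.card : ℝ≥0∞) * ENNReal.ofReal (s α' ε)
        ≤ (quantizationNumber μ (E (k+1)) + 1) * ENNReal.ofReal (s α (E (k+1))) :=
          mul_le_mul' hcard (ENNReal.ofReal_le_ofReal hchain)
      _ = quantizationNumber μ (E (k+1)) * ENNReal.ofReal (s α (E (k+1)))
          + ENNReal.ofReal (s α (E (k+1))) := by rw [add_mul, one_mul]
      _ ≤ 1 + 1 := add_le_add (hQE (k+1)) (ENNReal.ofReal_le_one.2 (hsαE1 (k+1)))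
      _ = 2 := one_add_one_eq_two
  -- value-quantile radii
  have hqset : ∀ j : ℕ, ∃ v : ℝ, v ∈ {v : ℝ | v ∈ Set.Ioc (0:ℝ) 2⁻¹ ∧ s α'' v ≤ (2⁻¹)^(j+1)} := by
    intro j
    have hev := (scaling_tendsto_zero hs hα''0).eventually_lt_const
      (show (0:ℝ) < (2⁻¹:ℝ)^(j+1) by positivity)
    rcases eventually_nhdsGT_iff.1 hev with ⟨θ, hθ0', hθ'⟩
    exact ⟨min θ 2⁻¹, ⟨⟨by positivity, min_le_right _ _⟩,
      (hθ' _ (by positivity) (min_le_left _ _)).le⟩⟩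
  set tq : ℕ → ℝ := fun j => sSup {v : ℝ | v ∈ Set.Ioc (0:ℝ) 2⁻¹ ∧ s α'' v ≤ (2⁻¹)^(j+1)}
    with htqdef
  have hqbdd : ∀ j, BddAbove {v : ℝ | v ∈ Set.Ioc (0:ℝ) 2⁻¹ ∧ s α'' v ≤ (2⁻¹)^(j+1)} :=
    fun j => ⟨2⁻¹, fun v hv => hv.1.2⟩
  have htq0 : ∀ j, 0 < tq j := fun j =>
    lt_of_lt_of_le (hqset j).choose_spec.1.1 (le_csSup (hqbdd j) (hqset j).choose_spec)
  have htqle : ∀ j, tq j ≤ 2⁻¹ :=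
    fun j => csSup_le ⟨_, (hqset j).choose_spec⟩ (fun v hv => hv.1.2)
  have htq_le_of : ∀ (j : ℕ) (w : ℝ), 0 < w → w ≤ 2⁻¹ → (2⁻¹:ℝ)^(j+1) < s α'' w →
      tq j ≤ w := by
    intro j w hw0 hw2 hsw
    refine csSup_le ⟨_, (hqset j).choose_spec⟩ ?_
    intro v hv
    by_contra hcon
    push_neg at hcon
    have hmon := hs.mono' hα''0 hw0 hcon.le (lt_of_le_of_lt hv.1.2 (by norm_num))
    exact absurd (hmon.trans hv.2) (not_le.2 hsw)
  have htq_val : ∀ (j : ℕ) (w : ℝ), tq j < w → w ≤ 2⁻¹ → (2⁻¹:ℝ)^(j+1) < s α'' w := by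
    intro j w h1 h2
    by_contra hcon
    push_neg at hcon
    exact absurd (le_csSup (hqbdd j) ⟨⟨(htq0 j).trans h1, h2⟩, hcon⟩) (not_le.2 h1)
  have htq_small : ∀ c : ℝ, 0 < c → ∃ j₀ : ℕ, ∀ j, j₀ ≤ j → tq j ≤ c := by
    intro c hc
    rcases le_or_gt 2⁻¹ c with h | h
    · exact ⟨0, fun j _ => (htqle j).trans h⟩
    · have hsc : 0 < s α'' c := hs.pos' hα''0 hc (h.trans (by norm_num))
      obtain ⟨j₀, hj₀⟩ := exists_pow_lt_of_lt_one hsc (show (2⁻¹:ℝ) < 1 by norm_num)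
      refine ⟨j₀, fun j hj => ?_⟩
      refine htq_le_of j c hc h.le ?_
      calc (2⁻¹:ℝ)^(j+1) ≤ (2⁻¹)^j₀ :=
            pow_le_pow_of_le_one (by norm_num) (by norm_num) (by omega)
        _ < s α'' c := hj₀
  -- choose the threshold level J₀
  have hmin0 : (0:ℝ) < min θ₁ 2⁻¹ := lt_min hθ₁0 (by norm_num)
  set cstar : ℝ := min (r K) (min (11 * (min θ₁ 2⁻¹) ^ κ') (((11:ℝ)⁻¹) ^ ((κ'-1)⁻¹) / 2))
    with hcstardef
  have hcstar0 : 0 < cstar := by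
    refine lt_min (hr0 K) (lt_min ?_ ?_)
    · have := Real.rpow_pos_of_pos hmin0 κ'
      linarith
    · have := Real.rpow_pos_of_pos (show (0:ℝ) < (11:ℝ)⁻¹ by norm_num) ((κ'-1)⁻¹)
      linarith
  obtain ⟨J₀, hJ₀⟩ := htq_small cstar hcstar0
  have hconda : ∀ j, J₀ ≤ j → tq j / 11 < 2 * r K := by
    intro j hj
    have h1 : tq j ≤ r K := (hJ₀ j hj).trans (min_le_left _ _)
    have := hr0 K
    linarith
  have hcondb : ∀ j, J₀ ≤ j → (2⁻¹:ℝ)^(j+1) < s α' (tq j / 11) := by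
    intro j hj
    have htqj := hJ₀ j hj
    have h0 : 0 < tq j / 11 := by have := htq0 j; positivity
    set wj : ℝ := (tq j / 11) ^ (κ'⁻¹ : ℝ) with hwjdef
    have hwj0 : 0 < wj := Real.rpow_pos_of_pos h0 _
    have hwjκ : wj ^ κ' = tq j / 11 := by
      rw [hwjdef, ← Real.rpow_mul h0.le, inv_mul_cancel₀ (by linarith), Real.rpow_one]
    have hwjle : wj ≤ min θ₁ 2⁻¹ := by
      by_contra hcon
      push_neg at hcon
      have hlt := Real.rpow_lt_rpow hmin0.le hcon (show (0:ℝ) < κ' by linarith)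
      rw [hwjκ] at hlt
      have hb2 : tq j ≤ 11 * (min θ₁ 2⁻¹) ^ κ' :=
        htqj.trans ((min_le_right _ _).trans (min_le_left _ _))
      linarith
    have htqwj : tq j < wj := by
      by_contra hcon
      push_neg at hcon
      have h1 : wj ^ κ' ≤ tq j ^ κ' :=
        Real.rpow_le_rpow hwj0.le hcon (by linarith)
      rw [hwjκ] at h1
      have h2 : tq j ^ (κ' - 1) < (11:ℝ)⁻¹ := by
        have hb3 : tq j ≤ ((11:ℝ)⁻¹) ^ ((κ'-1)⁻¹) / 2 :=
          htqj.trans ((min_le_right _ _).trans (min_le_right _ _))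
        have hxpos : (0:ℝ) < ((11:ℝ)⁻¹) ^ ((κ'-1)⁻¹) :=
          Real.rpow_pos_of_pos (by norm_num) _
        have h4 : tq j < ((11:ℝ)⁻¹) ^ ((κ'-1)⁻¹) := lt_of_le_of_lt hb3 (by linarith)
        have h5 := Real.rpow_lt_rpow (htq0 j).le h4 (show (0:ℝ) < κ'-1 by linarith)
        rwa [← Real.rpow_mul (by norm_num : (0:ℝ) ≤ (11:ℝ)⁻¹),
          inv_mul_cancel₀ (show κ'-1 ≠ 0 by linarith), Real.rpow_one] at h5
      have h3 : tq j ^ κ' = tq j * tq j ^ (κ'-1) := by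
        rw [show κ' = 1 + (κ'-1) by ring, Real.rpow_add (htq0 j), Real.rpow_one]
        ring_nf
      rw [h3] at h1
      have h6 : tq j * tq j ^ (κ'-1) < tq j * (11:ℝ)⁻¹ :=
        mul_lt_mul_of_pos_left h2 (htq0 j)
      have h7 : tq j * (11:ℝ)⁻¹ = tq j / 11 := by ring
      linarith
    have hineq := hθ₁ wj hwj0 (hwjle.trans (min_le_left _ _))
    rw [hwjκ] at hineq
    exact lt_of_lt_of_le (htq_val j wj htqwj (hwjle.trans (min_le_right _ _))) hineq
  -- per-level covers
  have hTex : ∀ j : ℕ, ∃ Tj : Finset X, J₀ ≤ j →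
      ((↑Tj : Set X) ⊆ Eset K ∧ (Eset K ⊆ ⋃ y ∈ Tj, ball y (tq j / 11)) ∧
        (Tj.card : ℝ≥0∞) * ENNReal.ofReal (s α' (tq j / 11)) ≤ 2) := by
    intro j
    by_cases hj : J₀ ≤ j
    · obtain ⟨Tj, h1, h2, h3⟩ := hcov (tq j / 11) (by have := htq0 j; positivity) (hconda j hj)
      exact ⟨Tj, fun _ => ⟨h1, h2, h3⟩⟩
    · exact ⟨∅, fun h => absurd h hj⟩
  choose T hT using hTex
  have hcardj : ∀ j, J₀ ≤ j → ((T j).card : ℝ≥0∞) ≤ 2 * ENNReal.ofReal ((2:ℝ)^(j+1)) := by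
    intro j hj
    obtain ⟨-, -, h3⟩ := hT j hj
    have hpos : (0:ℝ) < (2⁻¹:ℝ)^(j+1) := by positivity
    have h4 : ((T j).card : ℝ≥0∞) * ENNReal.ofReal ((2⁻¹:ℝ)^(j+1)) ≤ 2 :=
      le_trans (mul_le_mul_right (ENNReal.ofReal_le_ofReal (hcondb j hj).le) _) h3
    have h5 : ((T j).card : ℝ≥0∞) ≤ 2 / ENNReal.ofReal ((2⁻¹:ℝ)^(j+1)) :=
      (ENNReal.le_div_iff_mul_le (Or.inl (ENNReal.ofReal_pos.2 hpos).ne')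
        (Or.inl ENNReal.ofReal_ne_top)).2 h4
    refine h5.trans (le_of_eq ?_)
    rw [div_eq_mul_inv, ← ENNReal.ofReal_inv_of_pos hpos]
    congr 2
    rw [← inv_pow, inv_inv]
  -- final stage
  set F' := C ∩ Eset K with hF'def
  set η : ℝ := (2⁻¹:ℝ)^(lam - 1) with hηdef
  have hη0 : 0 < η := Real.rpow_pos_of_pos (by norm_num) _
  have hη1 : η < 1 := Real.rpow_lt_one (by norm_num) (by norm_num) (by linarith)
  have hηE1 : ENNReal.ofReal η < 1 := by rwa [ENNReal.ofReal_lt_one]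
  set CONST : ℝ≥0∞ := 4 * (M:ℝ≥0∞) * (1 - ENNReal.ofReal η)⁻¹ with hCONSTdef
  have hCONSTtop : CONST ≠ ⊤ := by
    rw [hCONSTdef]
    exact ENNReal.mul_ne_top (ENNReal.mul_ne_top (by simp) (by simp))
      (ENNReal.inv_ne_top.2 (tsub_pos_iff_lt.2 hηE1).ne')
  have main_n : ∀ n : ℕ, μ F' ≤ CONST * (ENNReal.ofReal η)^n := by
    intro n
    set N := max J₀ n with hNdef
    have hδex : ∀ᶠ δ in 𝓝[>] (0:ℝ),
        (0 < δ ∧ 5*δ ≤ θ₂) ∧ (5*δ ≤ 2⁻¹ ∧ s α'' (5*δ) < (2⁻¹:ℝ)^(N+2)) := by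
      have h5 : Tendsto (fun δ : ℝ => 5*δ) (𝓝[>] (0:ℝ)) (𝓝[>] (0:ℝ)) :=
        tendsto_const_mul_nhdsGT (by norm_num)
      refine Filter.Eventually.and (Filter.Eventually.and ?_ ?_) (Filter.Eventually.and ?_ ?_)
      · exact eventually_mem_Ioo01.mono fun δ h => h.1
      · exact h5.eventually (Filter.eventually_of_mem (Ioc_mem_nhdsGT hθ₂0)
          (fun w hw => hw.2))
      · exact h5.eventually (Filter.eventually_of_mem
          (Ioc_mem_nhdsGT (show (0:ℝ) < 2⁻¹ by norm_num)) (fun w hw => hw.2))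
      · exact h5.eventually ((scaling_tendsto_zero hs hα''0).eventually_lt_const
          (show (0:ℝ) < (2⁻¹:ℝ)^(N+2) by positivity))
    obtain ⟨δ, ⟨hδ0, h5δθ₂⟩, h5δhalf, hδval⟩ := hδex.exists
    have h5δ1 : 5*δ < 1 := lt_of_le_of_lt h5δhalf (by norm_num)
    have hwit : ∀ x : X, ∃ ρx : ℝ, (0 < ρx ∧ ρx ≤ δ) ∧ (x ∈ F' →
        μ (ball x (5*ρx)) ≤ (M:ℝ≥0∞) * ENNReal.ofReal (s q (5*ρx))) := by
      intro x
      by_cases hx : x ∈ F'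
      · have hfreq : ∃ᶠ ε in 𝓝[>] (0:ℝ), μ (ball x ε) ≤ (M:ℝ≥0∞) * ENNReal.ofReal (s q ε) :=
          hx.1
        have hev : ∀ᶠ ε in 𝓝[>] (0:ℝ), ε ∈ Set.Ioc (0:ℝ) (5*δ) :=
          Filter.eventually_of_mem (Ioc_mem_nhdsGT (by linarith)) (fun _ h => h)
        obtain ⟨ε, hbad, hIoc⟩ := (hfreq.and_eventually hev).exists
        refine ⟨ε/5, ⟨by have := hIoc.1; positivity, by linarith [hIoc.2]⟩, fun _ => ?_⟩
        rw [show 5*(ε/5) = ε by ring]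
        exact hbad
      · exact ⟨δ, ⟨hδ0, le_rfl⟩, fun h => absurd h hx⟩
    choose rad hrad1 hrad2 using hwit
    obtain ⟨u, huF', hdisj, hVit⟩ :=
      Vitali.exists_disjoint_subfamily_covering_enlargement_closedBall
        F' id rad δ (fun x _ => (hrad1 x).2) 4 (by norm_num)
    have hucov : F' ⊆ ⋃ b ∈ u, closedBall (id b) (4 * rad b) := by
      intro x hx
      obtain ⟨b, hbu, hsub⟩ := hVit x hx
      exact mem_biUnion hbu (hsub (mem_closedBall_self (hrad1 x).1.le))
    have hcnt : u.Countable := by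
      refine Set.PairwiseDisjoint.countable_of_isOpen (hdisj.mono ?_)
        (fun b _ => isOpen_ball) (fun b _ => ⟨b, mem_ball_self (hrad1 b).1⟩)
      intro b
      exact ball_subset_closedBall
    haveI := hcnt.to_subtype
    have hcap : μ F' ≤ ∑' b : ↥u, μ (closedBall (b:X) (4 * rad (b:X))) :=
      le_trans (measure_mono hucov) (measure_biUnion_le μ hcnt _)
    have h5rad : ∀ b : ↥u, 0 < 5 * rad (b:X) ∧ 5 * rad (b:X) ≤ 5*δ := by
      intro b
      constructor
      · have := (hrad1 (b:X)).1; linarith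
      · have := (hrad1 (b:X)).2; linarith
    have hv0 : ∀ b : ↥u, 0 < s α'' (5 * rad (b:X)) := fun b =>
      hs.pos' hα''0 (h5rad b).1 (lt_of_le_of_lt (h5rad b).2 h5δ1)
    have hvle : ∀ b : ↥u, s α'' (5 * rad (b:X)) < (2⁻¹:ℝ)^(N+2) := by
      intro b
      refine lt_of_le_of_lt ?_ hδval
      exact hs.mono' hα''0 (h5rad b).1 (h5rad b).2 h5δ1
    have hjex : ∀ b : ↥u, ∃ j : ℕ, (2⁻¹:ℝ)^(j+1) < s α'' (5 * rad (b:X)) := by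
      intro b
      obtain ⟨j, hj⟩ := exists_pow_lt_of_lt_one (hv0 b) (show (2⁻¹:ℝ) < 1 by norm_num)
      exact ⟨j, lt_of_le_of_lt (pow_le_pow_of_le_one (by norm_num) (by norm_num) (by omega)) hj⟩
    set jb : ↥u → ℕ := fun b => Nat.find (hjex b) with hjbdef
    have hjb_spec : ∀ b : ↥u, (2⁻¹:ℝ)^(jb b + 1) < s α'' (5 * rad (b:X)) :=
      fun b => Nat.find_spec (hjex b)
    have hjb_ge : ∀ b : ↥u, N + 1 ≤ jb b := by
      intro b
      have h2 := lt_trans (hjb_spec b) (hvle b)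
      have h3 := (pow_lt_pow_iff_right_of_lt_one₀ (show (0:ℝ) < 2⁻¹ by norm_num)
        (show (2⁻¹:ℝ) < 1 by norm_num)).1 h2
      omega
    have hjb_min : ∀ b : ↥u, s α'' (5 * rad (b:X)) ≤ (2⁻¹:ℝ)^(jb b) := by
      intro b
      have hpos : 0 < jb b := by have := hjb_ge b; omega
      have hm := Nat.find_min (hjex b) (show jb b - 1 < jb b by omega)
      rw [show jb b - 1 + 1 = jb b by omega] at hm
      exact not_lt.1 hm
    have hradlb : ∀ b : ↥u, tq (jb b) ≤ 5 * rad (b:X) := fun b =>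
      htq_le_of (jb b) _ (h5rad b).1 ((h5rad b).2.trans h5δhalf) (hjb_spec b)
    have hsep : ∀ b b' : ↥u, b ≠ b' → rad (b:X) < dist (b:X) (b':X) := by
      intro b b' hne
      have hd := hdisj b.2 b'.2 (fun hcc => hne (Subtype.ext hcc))
      by_contra hcon
      push_neg at hcon
      have h1 : (b':X) ∈ closedBall (id (b:X)) (rad (b:X)) := by
        simp only [id_eq]
        rw [mem_closedBall, dist_comm]
        exact hcon
      have h2 : (b':X) ∈ closedBall (id (b':X)) (rad (b':X)) :=
        mem_closedBall_self (hrad1 _).1.le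
      exact Set.disjoint_left.1 hd h1 h2
    have hJ₀N : J₀ ≤ N := le_max_left _ _
    have hjbJ₀ : ∀ b : ↥u, J₀ ≤ jb b := fun b => by have := hjb_ge b; omega
    have hcen : ∀ b : ↥u, ∃ y : X, y ∈ T (jb b) ∧ (b:X) ∈ ball y (tq (jb b) / 11) := by
      intro b
      have hbE : (b:X) ∈ Eset K := (huF' b.2).2
      obtain ⟨-, h2, -⟩ := hT (jb b) (hjbJ₀ b)
      have h3 := h2 hbE
      rw [mem_iUnion₂] at h3
      obtain ⟨y, hyT, hy⟩ := h3
      exact ⟨y, hyT, hy⟩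
    choose cen hcen1 hcen2 using hcen
    have hinj : Function.Injective (fun b : ↥u => ((jb b - (N+1) : ℕ), cen b)) := by
      intro b b' h
      have h1 : jb b - (N+1) = jb b' - (N+1) := congrArg Prod.fst h
      have h2 : cen b = cen b' := congrArg Prod.snd h
      have hj : jb b = jb b' := by
        have hgb := hjb_ge b; have hgb' := hjb_ge b'; omega
      by_contra hne
      have hd := hsep b b' hne
      have hb1 : dist (b:X) (cen b) < tq (jb b)/11 := mem_ball.1 (hcen2 b)
      have hb2 : dist (b':X) (cen b') < tq (jb b')/11 := mem_ball.1 (hcen2 b')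
      rw [← hj, ← h2] at hb2
      have h3 : dist (b:X) (b':X) < 2 * (tq (jb b)/11) := by
        calc dist (b:X) (b':X) ≤ dist (b:X) (cen b) + dist (cen b) (b':X) :=
              dist_triangle _ _ _
          _ = dist (b:X) (cen b) + dist (b':X) (cen b) := by rw [dist_comm (cen b) _]
          _ < tq (jb b)/11 + tq (jb b)/11 := add_lt_add hb1 hb2
          _ = 2 * (tq (jb b)/11) := by ring
      have h4 := hradlb b
      have h5 := htq0 (jb b)
      nlinarith
    set W : ℕ → ℝ≥0∞ := fun j => ENNReal.ofReal (((2⁻¹:ℝ)^j)^lam) with hWdef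
    have hbb : ∀ b : ↥u, μ (closedBall (b:X) (4 * rad (b:X))) ≤ (M:ℝ≥0∞) * W (jb b) := by
      intro b
      have hb' : (b:X) ∈ F' := huF' b.2
      have hsubb : closedBall (b:X) (4 * rad (b:X)) ⊆ ball (b:X) (5 * rad (b:X)) := by
        refine closedBall_subset_ball ?_
        have := (hrad1 (b:X)).1; linarith
      refine le_trans (measure_mono hsubb) ((hrad2 (b:X) hb').trans ?_)
      refine mul_le_mul_right (ENNReal.ofReal_le_ofReal ?_) _
      have h1 : s q (5*rad (b:X)) ≤ (s α'' (5*rad (b:X))) ^ lam :=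
        hθ₂ _ (h5rad b).1 ((h5rad b).2.trans h5δθ₂)
      exact h1.trans (Real.rpow_le_rpow (hv0 b).le (hjb_min b) (by linarith))
    set g : ℕ × X → ℝ≥0∞ := fun p =>
      if p.2 ∈ T (p.1 + (N+1)) then (M:ℝ≥0∞) * W (p.1 + (N+1)) else 0 with hgdef
    have hgb : ∀ b : ↥u, (M:ℝ≥0∞) * W (jb b) = g (jb b - (N+1), cen b) := by
      intro b
      have hN1 : jb b - (N+1) + (N+1) = jb b := Nat.sub_add_cancel (hjb_ge b)
      rw [hgdef]
      simp only
      rw [hN1, if_pos (hcen1 b)]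
    have hsum1 : μ F' ≤ ∑' p : ℕ × X, g p := by
      refine hcap.trans (le_trans (ENNReal.tsum_le_tsum
        (fun b => (hbb b).trans_eq (hgb b))) ?_)
      exact ENNReal.tsum_comp_le_tsum_of_injective hinj g
    have hinner : ∀ i : ℕ, ∑' y : X, g (i, y) =
        ((T (i+(N+1))).card : ℝ≥0∞) * ((M:ℝ≥0∞) * W (i+(N+1))) := by
      intro i
      have hsupp : ∀ y : X, y ∉ T (i+(N+1)) → g (i, y) = 0 := by
        intro y hy
        rw [hgdef]; simp only; rw [if_neg hy]
      rw [tsum_eq_sum hsupp]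
      have hval' : ∀ y ∈ T (i+(N+1)), g (i, y) = (M:ℝ≥0∞) * W (i+(N+1)) := by
        intro y hy
        rw [hgdef]; simp only; rw [if_pos hy]
      rw [Finset.sum_congr rfl hval', Finset.sum_const, nsmul_eq_mul]
    have houter : ∀ i : ℕ, ((T (i+(N+1))).card : ℝ≥0∞) * ((M:ℝ≥0∞) * W (i+(N+1))) ≤
        (4 * (M:ℝ≥0∞)) * (ENNReal.ofReal η)^(i+(N+1)) := by
      intro i
      have hj : J₀ ≤ i + (N+1) := by omega
      refine le_trans (mul_le_mul' (hcardj _ hj) le_rfl) (le_of_eq ?_)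
      have hreal : (2:ℝ)^(i+(N+1)+1) * ((2⁻¹:ℝ)^(i+(N+1)))^lam = 2 * η^(i+(N+1)) := by
        have h1 : ((2⁻¹:ℝ)^(i+(N+1)))^lam = ((2⁻¹:ℝ)^lam)^(i+(N+1)) :=
          pow_rpow_comm (by norm_num) _ lam
        have h2 : ((2⁻¹:ℝ))^lam = 2⁻¹ * η := by
          conv_lhs => rw [show lam = (lam - 1) + 1 by ring]
          rw [Real.rpow_add_one (show (2⁻¹:ℝ) ≠ 0 by norm_num), hηdef]
          ring
        have h3 : (2:ℝ)^(i+(N+1)) * (2⁻¹:ℝ)^(i+(N+1)) = 1 := by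
          rw [← mul_pow]; norm_num
        rw [h1, h2, mul_pow, pow_succ]
        linear_combination (2 * η^(i+(N+1))) * h3
      calc 2 * ENNReal.ofReal ((2:ℝ)^(i+(N+1)+1)) * ((M:ℝ≥0∞) * W (i+(N+1)))
          = (2 * (M:ℝ≥0∞)) * (ENNReal.ofReal ((2:ℝ)^(i+(N+1)+1)) * W (i+(N+1))) := by ring
        _ = (2 * (M:ℝ≥0∞)) *
            ENNReal.ofReal ((2:ℝ)^(i+(N+1)+1) * ((2⁻¹:ℝ)^(i+(N+1)))^lam) := by
            rw [hWdef]
            simp only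
            rw [← ENNReal.ofReal_mul (by positivity)]
        _ = (2 * (M:ℝ≥0∞)) * ENNReal.ofReal (2 * η^(i+(N+1))) := by rw [hreal]
        _ = (4 * (M:ℝ≥0∞)) * (ENNReal.ofReal η)^(i+(N+1)) := by
            rw [ENNReal.ofReal_mul (by norm_num), ENNReal.ofReal_pow hη0.le,
              ENNReal.ofReal_ofNat]
            ring
    have hsum2 : ∑' p : ℕ × X, g p ≤ CONST * (ENNReal.ofReal η)^(N+1) := by
      rw [ENNReal.tsum_prod']
      calc ∑' (i : ℕ) (y : X), g (i, y)
          ≤ ∑' i : ℕ, (4 * (M:ℝ≥0∞)) * (ENNReal.ofReal η)^(i+(N+1)) := by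
            exact ENNReal.tsum_le_tsum (fun i => (le_of_eq (hinner i)).trans (houter i))
        _ = ∑' i : ℕ, (4 * (M:ℝ≥0∞)) * ((ENNReal.ofReal η)^(N+1) * (ENNReal.ofReal η)^i) :=
            tsum_congr fun i => by rw [pow_add]; ring
        _ = CONST * (ENNReal.ofReal η)^(N+1) := by
            rw [ENNReal.tsum_mul_left, ENNReal.tsum_mul_left, ENNReal.tsum_geometric, hCONSTdef]
            ring
    refine (hsum1.trans hsum2).trans ?_
    exact mul_le_mul_right (pow_le_pow_of_le_one zero_le hηE1.le (by omega)) _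
  have hconv : Tendsto (fun n : ℕ => CONST * (ENNReal.ofReal η)^n) atTop (𝓝 0) := by
    have hp := ENNReal.tendsto_pow_atTop_nhds_zero_of_lt_one hηE1
    have h5 : Tendsto (fun n : ℕ => CONST * (ENNReal.ofReal η)^n) atTop (𝓝 (CONST * 0)) :=
      ENNReal.Tendsto.const_mul hp (Or.inr hCONSTtop)
    simpa using h5
  exact hK (le_antisymm (ge_of_tendsto' hconv main_n) zero_le)




end Part2
lemma part2_essSup_le {X : Type*} [MetricSpace X] [MeasurableSpace X] [BorelSpace X]
    [TopologicalSpace.SeparableSpace X] (μ : Measure X) [IsFiniteMeasure μ]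
    {s : ℝ → ℝ → ℝ} (hs : IsScaling s) :
    essSup (upperLocalScale s μ) μ ≤ upperQuantScale s μ := by
  rw [upperQuantScale]
  refine le_iInf fun α => le_iInf fun hα => ?_
  obtain ⟨hα0, hQ⟩ := hα
  refine essSup_le_of_ae_le _ ?_
  have hae : ∀ᵐ x ∂μ, ∀ (qq : ℚ) (M : ℕ), α < (qq:ℝ) →
      ¬ (∃ᶠ ε in 𝓝[>] (0:ℝ), μ (ball x ε) ≤ (M:ℝ≥0∞) * ENNReal.ofReal (s (qq:ℝ) ε)) := by
    rw [ae_all_iff]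
    intro qq
    rw [ae_all_iff]
    intro M
    by_cases hq : α < (qq:ℝ)
    · have h0 := bad_set_null μ hs hα0 hq hQ M
      rw [ae_iff]
      refine measure_mono_null ?_ h0
      intro x hx
      simp only [mem_setOf_eq] at hx ⊢
      push_neg at hx
      exact hx.2
    · exact ae_of_all _ (fun x h => absurd h hq)
  filter_upwards [hae] with x hx
  by_contra hcon
  push_neg at hcon
  obtain ⟨qq, hq0, h1, h2⟩ := ENNReal.lt_iff_exists_rat_btwn.1 hcon
  have hofq : ((Real.toNNReal (qq:ℝ)) : ℝ≥0∞) = ENNReal.ofReal (qq:ℝ) := rfl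
  have hαq : α < (qq:ℝ) := by
    by_contra hle
    push_neg at hle
    have hle2 := ENNReal.ofReal_le_ofReal hle
    rw [hofq] at h1
    exact absurd h1 (not_lt.2 hle2)
  have htend : Tendsto (fun ε : ℝ => μ (ball x ε) / ENNReal.ofReal (s (qq:ℝ) ε))
      (𝓝[>] (0:ℝ)) (𝓝 ⊤) := by
    rw [ENNReal.tendsto_nhds_top_iff_nat]
    intro n
    have hnot := hx qq n hαq
    rw [Filter.not_frequently] at hnot
    filter_upwards [hnot, eventually_mem_Ioo01] with ε hev hε
    push_neg at hev
    have hspos : 0 < s (qq:ℝ) ε := hs.pos' (hα0.trans hαq) hε.1 hε.2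
    rw [ENNReal.lt_div_iff_mul_lt (Or.inl (ENNReal.ofReal_pos.2 hspos).ne')
      (Or.inl ENNReal.ofReal_ne_top)]
    exact hev
  have hle : upperLocalScale s μ x ≤ ENNReal.ofReal (qq:ℝ) := by
    rw [upperLocalScale]
    exact iInf₂_le (qq:ℝ) ⟨hα0.trans hαq, htend⟩
  rw [hofq] at h2
  exact absurd (hle.trans_lt h2) (lt_irrefl _)
theorem essSup_localScale_le_quantScale
    {X : Type*} [MetricSpace X] [TopologicalSpace.SeparableSpace X]
    [MeasurableSpace X] [BorelSpace X]
    (μ : Measure X) [IsFiniteMeasure μ] (s : ℝ → ℝ → ℝ) (hs : IsScaling s) :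
    essSup (lowerLocalScale s μ) μ ≤ lowerQuantScale s μ ∧
    essSup (upperLocalScale s μ) μ ≤ upperQuantScale s μ := by  exact ⟨part1_essSup_le μ hs, part2_essSup_le μ hs⟩

end
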